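/- Let T̂ and T be deterministic dynamics on a metric space (S,d), let r be bounded and the value function V_M^π be L-Lipschitz. Then η_M(π̂) ≥ sup_π { η_M(π) − 2γL · Ē_{(s,a)∼ρ^π_{T̂}}[ d(t̂(s,a), t(s,a)) ] }, where π̂ maximizes the penalized return with penalty λu(s,a) = γL·d(t̂(s,a), t(s,a)). -/

import Mathlib

open scoped BigOperators
open Filter Topology Classical

section MDP

variable {S A : Type*} [Fintype S] [Fintype A]

/-- π is a valid stochastic policy. -/
def IsPolicy (π : S → A → ℝ) : Prop :=
  (∀ s a, 0 ≤ π s a) ∧ ∀ s, ∑ a, π s a = 1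

/-- T is a valid transition kernel. -/
def IsKernel (T : S → A → S → ℝ) : Prop :=
  (∀ s a s', 0 ≤ T s a s') ∧ ∀ s a, ∑ s', T s a s' = 1

/-- μ is a probability distribution on states. -/
def IsDist (μ : S → ℝ) : Prop :=
  (∀ s, 0 ≤ μ s) ∧ ∑ s, μ s = 1

/-- Distribution of the state at time t under policy π and dynamics T, from μ0. -/
def stateDist (T : S → A → S → ℝ) (π : S → A → ℝ) (μ0 : S → ℝ) : ℕ → S → ℝ
  | 0 => μ0
  | t + 1 => fun s' => ∑ s, ∑ a, stateDist T π μ0 t s * π s a * T s a s'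

/-- Unnormalized discounted occupancy measure ρ^π_T(s,a). -/
noncomputable def occupancy (γ : ℝ) (T : S → A → S → ℝ) (π : S → A → ℝ)
    (μ0 : S → ℝ) (s : S) (a : A) : ℝ :=
  π s a * ∑' t : ℕ, γ ^ t * stateDist T π μ0 t s

/-- Improper expectation Ē of f with respect to the occupancy measure. -/
noncomputable def expOcc (γ : ℝ) (T : S → A → S → ℝ) (π : S → A → ℝ)
    (μ0 : S → ℝ) (f : S → A → ℝ) : ℝ :=
  ∑ s, ∑ a, occupancy γ T π μ0 s a * f s a

/-- Expected discounted return η_M(π). -/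
noncomputable def ret (γ : ℝ) (T : S → A → S → ℝ) (π : S → A → ℝ)
    (μ0 : S → ℝ) (r : S → A → ℝ) : ℝ :=
  ∑' t : ℕ, γ ^ t * ∑ s, ∑ a, stateDist T π μ0 t s * π s a * r s a

/-- Value function V_M^π(s): return starting from the Dirac distribution at s. -/
noncomputable def value (γ : ℝ) (T : S → A → S → ℝ) (π : S → A → ℝ)
    (r : S → A → ℝ) (s0 : S) : ℝ :=
  ret γ T π (fun s => if s = s0 then 1 else 0) r

/-- G^π(s,a) = E_{s'∼T̂(s,a)}[V_M^π(s')] − E_{s'∼T(s,a)}[V_M^π(s')]. -/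
noncomputable def Gpi (γ : ℝ) (T Th : S → A → S → ℝ) (π : S → A → ℝ)
    (r : S → A → ℝ) (s : S) (a : A) : ℝ :=
  (∑ s', Th s a s' * value γ T π r s') - ∑ s', T s a s' * value γ T π r s'

/-- Total variation distance between two distributions on a finite set. -/
noncomputable def tvDist (P Q : S → ℝ) : ℝ :=
  ⨆ E : Finset S, |(∑ s ∈ E, P s) - ∑ s ∈ E, Q s|

/-- Integral probability metric induced by a function class F. -/
noncomputable def ipm (F : Set (S → ℝ)) (P Q : S → ℝ) : ℝ :=
  sSup {x : ℝ | ∃ f ∈ F, x = |(∑ s, P s * f s) - ∑ s, Q s * f s|}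


/- ============ auxiliary lemmas ============ -/

noncomputable def dirac (s0 : S) : S → ℝ := fun s => if s = s0 then 1 else 0

lemma isDist_dirac (s0 : S) : IsDist (dirac s0) := by
  constructor
  · intro s; unfold dirac; split <;> norm_num
  · simp [dirac]

lemma isDist_le_one {μ : S → ℝ} (hμ : IsDist μ) (s : S) : μ s ≤ 1 := by
  rw [← hμ.2]
  exact Finset.single_le_sum (fun i _ => hμ.1 i) (Finset.mem_univ s)

/-- boundOf f bounds |f| pointwise. -/
noncomputable def boundOf (f : S → A → ℝ) : ℝ := ∑ s, ∑ a, |f s a|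

lemma boundOf_nonneg (f : S → A → ℝ) : 0 ≤ boundOf f :=
  Finset.sum_nonneg fun s _ => Finset.sum_nonneg fun a _ => abs_nonneg _

lemma abs_le_boundOf (f : S → A → ℝ) (s : S) (a : A) : |f s a| ≤ boundOf f := by
  calc |f s a| ≤ ∑ a, |f s a| :=
        Finset.single_le_sum (f := fun a => |f s a|) (fun i _ => abs_nonneg _)
          (Finset.mem_univ a)
    _ ≤ boundOf f :=
        Finset.single_le_sum (f := fun s => ∑ a, |f s a|)
          (fun i _ => Finset.sum_nonneg fun j _ => abs_nonneg _) (Finset.mem_univ s)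

lemma stateDist_isDist {T : S → A → S → ℝ} (hT : IsKernel T)
    {π : S → A → ℝ} (hπ : IsPolicy π) {μ0 : S → ℝ} (hμ : IsDist μ0) :
    ∀ t, IsDist (stateDist T π μ0 t) := by
  intro t
  induction t with
  | zero => exact hμ
  | succ t ih =>
    constructor
    · intro s'
      exact Finset.sum_nonneg fun s _ => Finset.sum_nonneg fun a _ =>
        mul_nonneg (mul_nonneg (ih.1 s) (hπ.1 s a)) (hT.1 s a s')
    · show ∑ s', ∑ s, ∑ a, stateDist T π μ0 t s * π s a * T s a s' = 1
      rw [Finset.sum_comm]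
      have h : ∀ s, ∑ s', ∑ a, stateDist T π μ0 t s * π s a * T s a s'
          = stateDist T π μ0 t s := by
        intro s
        rw [Finset.sum_comm]
        have h2 : ∀ a, ∑ s', stateDist T π μ0 t s * π s a * T s a s'
            = stateDist T π μ0 t s * π s a := by
          intro a; rw [← Finset.mul_sum, hT.2, mul_one]
        simp_rw [h2, ← Finset.mul_sum, hπ.2, mul_one]
      simp_rw [h]; exact ih.2

lemma summable_geom_bdd {γ : ℝ} (hγ0 : 0 ≤ γ) (hγ1 : γ < 1) {c : ℕ → ℝ} {C : ℝ}
    (hc : ∀ t, |c t| ≤ C) : Summable (fun t => γ ^ t * c t) := by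
  apply Summable.of_norm_bounded (g := fun t => γ ^ t * C)
    ((summable_geometric_of_lt_one hγ0 hγ1).mul_right C)
  intro t
  rw [Real.norm_eq_abs, abs_mul, abs_pow, abs_of_nonneg hγ0]
  exact mul_le_mul_of_nonneg_left (hc t) (pow_nonneg hγ0 t)

lemma sum_pair_abs_le {d : S → ℝ} {p : S → A → ℝ} (hd : IsDist d) (hp : IsPolicy p)
    (f : S → A → ℝ) {C : ℝ} (hC : 0 ≤ C) (hf : ∀ s a, |f s a| ≤ C) :
    |∑ s, ∑ a, d s * p s a * f s a| ≤ C := by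
  calc |∑ s, ∑ a, d s * p s a * f s a|
      ≤ ∑ s, ∑ a, |d s * p s a * f s a| := by
        refine (Finset.abs_sum_le_sum_abs _ _).trans ?_
        exact Finset.sum_le_sum fun s _ => Finset.abs_sum_le_sum_abs _ _
    _ ≤ ∑ s, ∑ a, d s * p s a * C := by
        refine Finset.sum_le_sum fun s _ => Finset.sum_le_sum fun a _ => ?_
        rw [abs_mul, abs_mul, abs_of_nonneg (hd.1 s), abs_of_nonneg (hp.1 s a)]
        exact mul_le_mul_of_nonneg_left (hf s a) (mul_nonneg (hd.1 s) (hp.1 s a))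
    _ = C := by
        simp_rw [mul_assoc, ← Finset.mul_sum, ← Finset.sum_mul, hp.2, one_mul]
        rw [← Finset.sum_mul, hd.2, one_mul]

/-- the per-time-step reward term is bounded, hence the return series is summable. -/
lemma summable_ret {γ : ℝ} (hγ0 : 0 ≤ γ) (hγ1 : γ < 1) {T : S → A → S → ℝ} (hT : IsKernel T)
    {π : S → A → ℝ} (hπ : IsPolicy π) {μ0 : S → ℝ} (hμ : IsDist μ0) (f : S → A → ℝ) :
    Summable (fun t => γ ^ t * ∑ s, ∑ a, stateDist T π μ0 t s * π s a * f s a) := by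
  apply summable_geom_bdd hγ0 hγ1 (C := boundOf f)
  intro t
  exact sum_pair_abs_le (stateDist_isDist hT hπ hμ t) hπ f (boundOf_nonneg f)
    (abs_le_boundOf f)

lemma ret_abs_le {γ : ℝ} (hγ0 : 0 ≤ γ) (hγ1 : γ < 1) {T : S → A → S → ℝ} (hT : IsKernel T)
    {π : S → A → ℝ} (hπ : IsPolicy π) {μ0 : S → ℝ} (hμ : IsDist μ0) (f : S → A → ℝ) :
    |ret γ T π μ0 f| ≤ boundOf f / (1 - γ) := by
  have h1γ : 0 < 1 - γ := by linarith
  have hb : ∀ t, |γ ^ t * ∑ s, ∑ a, stateDist T π μ0 t s * π s a * f s a|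
      ≤ γ ^ t * boundOf f := by
    intro t
    rw [abs_mul, abs_pow, abs_of_nonneg hγ0]
    exact mul_le_mul_of_nonneg_left
      (sum_pair_abs_le (stateDist_isDist hT hπ hμ t) hπ f (boundOf_nonneg f)
        (abs_le_boundOf f)) (pow_nonneg hγ0 t)
  have hs := summable_ret hγ0 hγ1 hT hπ hμ f
  have hgeo : Summable (fun t : ℕ => γ ^ t * boundOf f) :=
    (summable_geometric_of_lt_one hγ0 hγ1).mul_right _
  have hsumval : (∑' t : ℕ, γ ^ t * boundOf f) = boundOf f / (1 - γ) := by
    rw [tsum_mul_right, tsum_geometric_of_lt_one hγ0 hγ1, div_eq_mul_inv, mul_comm]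
  rw [abs_le]
  constructor
  · have h := Summable.tsum_le_tsum (f := fun t : ℕ => -(γ ^ t * boundOf f))
      (fun t => (abs_le.1 (hb t)).1) hgeo.neg hs
    rw [tsum_neg, hsumval] at h; exact h
  · have h := Summable.tsum_le_tsum (fun t => (abs_le.1 (hb t)).2) hs hgeo
    rw [hsumval] at h; exact h

lemma sum_swap3 {X Y Z : Type*} [Fintype X] [Fintype Y] [Fintype Z] (f : X → Y → Z → ℝ) :
    ∑ x, ∑ y, ∑ z, f x y z = ∑ z, ∑ x, ∑ y, f x y z := by
  calc ∑ x, ∑ y, ∑ z, f x y z = ∑ x, ∑ z, ∑ y, f x y z :=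
        Finset.sum_congr rfl fun x _ => Finset.sum_comm
    _ = ∑ z, ∑ x, ∑ y, f x y z := Finset.sum_comm

lemma expOcc_eq_ret {γ : ℝ} (hγ0 : 0 ≤ γ) (hγ1 : γ < 1) {T : S → A → S → ℝ} (hT : IsKernel T)
    {π : S → A → ℝ} (hπ : IsPolicy π) {μ0 : S → ℝ} (hμ : IsDist μ0) (f : S → A → ℝ) :
    expOcc γ T π μ0 f = ret γ T π μ0 f := by
  have hsb : ∀ s a, Summable (fun t : ℕ => γ ^ t * (stateDist T π μ0 t s * π s a * f s a)) := by
    intro s a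
    apply summable_geom_bdd hγ0 hγ1 (C := |π s a * f s a|)
    intro t
    rw [mul_assoc, abs_mul]
    have h1 : |stateDist T π μ0 t s| ≤ 1 :=
      abs_le.mpr ⟨by linarith [(stateDist_isDist hT hπ hμ t).1 s],
        isDist_le_one (stateDist_isDist hT hπ hμ t) s⟩
    exact mul_le_of_le_one_left (abs_nonneg _) h1
  have key : ∀ s a, occupancy γ T π μ0 s a * f s a
      = ∑' t : ℕ, γ ^ t * (stateDist T π μ0 t s * π s a * f s a) := by
    intro s a
    unfold occupancy
    rw [mul_comm (π s a), mul_assoc, ← tsum_mul_right]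
    exact tsum_congr fun t => by ring
  unfold expOcc
  simp_rw [key]
  have hret : ret γ T π μ0 f
      = ∑' t : ℕ, ∑ s, ∑ a, γ ^ t * (stateDist T π μ0 t s * π s a * f s a) := by
    unfold ret
    refine tsum_congr fun t => ?_
    rw [Finset.mul_sum]
    exact Finset.sum_congr rfl fun s _ => by rw [Finset.mul_sum]
  rw [hret, Summable.tsum_finsetSum (fun s _ => summable_sum (fun a _ => hsb s a))]
  exact Finset.sum_congr rfl fun s _ => (Summable.tsum_finsetSum (fun a _ => hsb s a)).symm

lemma stateDist_shift (T : S → A → S → ℝ) (π : S → A → ℝ) (μ0 : S → ℝ) :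
    ∀ t, stateDist T π μ0 (t + 1) = stateDist T π (stateDist T π μ0 1) t := by
  intro t
  induction t with
  | zero => rfl
  | succ t ih =>
    funext s'
    show ∑ s, ∑ a, stateDist T π μ0 (t + 1) s * π s a * T s a s' = _
    rw [ih]
    rfl

lemma ret_shift {γ : ℝ} (hγ0 : 0 ≤ γ) (hγ1 : γ < 1) {T : S → A → S → ℝ} (hT : IsKernel T)
    {π : S → A → ℝ} (hπ : IsPolicy π) {μ0 : S → ℝ} (hμ : IsDist μ0) (f : S → A → ℝ) :
    ret γ T π μ0 f = (∑ s, ∑ a, μ0 s * π s a * f s a)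
      + γ * ret γ T π (stateDist T π μ0 1) f := by
  unfold ret
  rw [Summable.tsum_eq_zero_add (summable_ret hγ0 hγ1 hT hπ hμ f)]
  simp only [pow_zero, one_mul]
  show _ = _ + γ * ∑' t : ℕ, γ ^ t * ∑ s, ∑ a, stateDist T π (stateDist T π μ0 1) t s * π s a * f s a
  congr 1
  rw [← tsum_mul_left]
  refine tsum_congr fun t => ?_
  rw [stateDist_shift T π μ0 t, pow_succ]
  ring

lemma stateDist_linear (T : S → A → S → ℝ) (π : S → A → ℝ) (μ0 : S → ℝ) :
    ∀ t s', stateDist T π μ0 t s' = ∑ s1, μ0 s1 * stateDist T π (dirac s1) t s' := by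
  intro t
  induction t with
  | zero =>
    intro s'
    show μ0 s' = ∑ s1, μ0 s1 * dirac s1 s'
    simp [dirac, mul_ite]
  | succ t ih =>
    intro s''
    show ∑ s, ∑ a, stateDist T π μ0 t s * π s a * T s a s'' = _
    simp_rw [ih, Finset.sum_mul]
    rw [sum_swap3]
    refine Finset.sum_congr rfl fun s1 _ => ?_
    show _ = μ0 s1 * ∑ s, ∑ a, stateDist T π (dirac s1) t s * π s a * T s a s''
    simp_rw [Finset.mul_sum]
    exact Finset.sum_congr rfl fun s _ => Finset.sum_congr rfl fun a _ => by ring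

lemma ret_linear {γ : ℝ} (hγ0 : 0 ≤ γ) (hγ1 : γ < 1) {T : S → A → S → ℝ} (hT : IsKernel T)
    {π : S → A → ℝ} (hπ : IsPolicy π) (μ0 : S → ℝ) (f : S → A → ℝ) :
    ret γ T π μ0 f = ∑ s1, μ0 s1 * ret γ T π (dirac s1) f := by
  unfold ret
  have hterm : ∀ t : ℕ, γ ^ t * ∑ s, ∑ a, stateDist T π μ0 t s * π s a * f s a
      = ∑ s1, μ0 s1 * (γ ^ t * ∑ s, ∑ a, stateDist T π (dirac s1) t s * π s a * f s a) := by
    intro t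
    simp_rw [stateDist_linear T π μ0 t, Finset.sum_mul, Finset.mul_sum]
    rw [sum_swap3]
    exact Finset.sum_congr rfl fun s1 _ => Finset.sum_congr rfl fun s _ =>
      Finset.sum_congr rfl fun a _ => by ring
  rw [tsum_congr hterm,
    Summable.tsum_finsetSum (fun s1 _ => ((summable_ret hγ0 hγ1 hT hπ (isDist_dirac s1) f).mul_left _))]
  exact Finset.sum_congr rfl fun s1 _ => tsum_mul_left

lemma inner_step (T' : S → A → S → ℝ) (π : S → A → ℝ) (d : S → ℝ) (V : S → ℝ) :
    ∑ s', (∑ s, ∑ a, d s * π s a * T' s a s') * V s'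
      = ∑ s, ∑ a, d s * π s a * ∑ s', T' s a s' * V s' := by
  simp_rw [Finset.sum_mul, Finset.mul_sum]
  rw [← sum_swap3]
  exact Finset.sum_congr rfl fun s _ => Finset.sum_congr rfl fun a _ =>
    Finset.sum_congr rfl fun s' _ => by ring

lemma value_eq_ret_dirac (γ : ℝ) (T : S → A → S → ℝ) (π : S → A → ℝ) (r : S → A → ℝ)
    (s0 : S) : value γ T π r s0 = ret γ T π (dirac s0) r := rfl

/-- The telescoping simulation identity. -/
lemma ret_diff_eq {γ : ℝ} (hγ0 : 0 < γ) (hγ1 : γ < 1) {T Th : S → A → S → ℝ}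
    (hT : IsKernel T) (hTh : IsKernel Th) {π : S → A → ℝ} (hπ : IsPolicy π)
    {μ0 : S → ℝ} (hμ : IsDist μ0) (r : S → A → ℝ) :
    ret γ Th π μ0 r - ret γ T π μ0 r = γ * ret γ Th π μ0 (Gpi γ T Th π r) := by
  set G : S → A → ℝ := Gpi γ T Th π r with hG
  set V : S → ℝ := value γ T π r with hV
  set μh : ℕ → S → ℝ := stateDist Th π μ0 with hμh
  set D : ℕ → ℝ := fun j => ∑ s, ∑ a, μh j s * π s a * G s a with hD
  set Aj : ℕ → ℝ := fun j =>
    (∑ t ∈ Finset.range j, γ ^ t * ∑ s, ∑ a, μh t s * π s a * r s a)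
      + γ ^ j * ∑ s, μh j s * V s with hAj
  have hμhD : ∀ j, IsDist (μh j) := fun j => stateDist_isDist hTh hπ hμ j
  have hdV : ∀ (d : S → ℝ), ∑ s, d s * V s = ret γ T π d r := by
    intro d
    rw [ret_linear hγ0.le hγ1 hT hπ d r]
    exact Finset.sum_congr rfl fun s _ => by rw [hV, value_eq_ret_dirac]
  have hA0 : Aj 0 = ret γ T π μ0 r := by
    simp only [hAj, Finset.range_zero, Finset.sum_empty, pow_zero, one_mul, zero_add]
    exact hdV μ0
  -- difference of consecutive terms
  have hdiff : ∀ j, Aj (j + 1) - Aj j = γ ^ (j + 1) * D j := by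
    intro j
    have hBell : ∑ s, μh j s * V s
        = (∑ s, ∑ a, μh j s * π s a * r s a)
          + γ * ∑ s', (∑ s, ∑ a, μh j s * π s a * T s a s') * V s' := by
      rw [hdV, ret_shift hγ0.le hγ1 hT hπ (hμhD j) r]
      congr 1
      rw [hdV]
      rfl
    have hnext : ∑ s, μh (j + 1) s * V s
        = ∑ s', (∑ s, ∑ a, μh j s * π s a * Th s a s') * V s' := rfl
    have hsucc : Aj (j + 1)
        = (∑ t ∈ Finset.range j, γ ^ t * ∑ s, ∑ a, μh t s * π s a * r s a)
          + γ ^ j * ∑ s, ∑ a, μh j s * π s a * r s a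
          + γ ^ (j + 1) * ∑ s, μh (j + 1) s * V s := by
      simp only [hAj, Finset.sum_range_succ]
    rw [hsucc, hnext]
    simp only [hAj]
    rw [hBell]
    simp only [hD, hG]
    rw [inner_step T π (μh j) V, inner_step Th π (μh j) V]
    have : ∀ s a, μh j s * π s a * Gpi γ T Th π r s a
        = μh j s * π s a * (∑ s', Th s a s' * V s')
          - μh j s * π s a * (∑ s', T s a s' * V s') := by
      intro s a; unfold Gpi; rw [← hV]; ring
    simp_rw [this, Finset.sum_sub_distrib]
    ring
  -- summability of the difference series
  have hDb : ∀ j, |D j| ≤ boundOf G :=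
    fun j => sum_pair_abs_le (hμhD j) hπ G (boundOf_nonneg G) (abs_le_boundOf G)
  have hsumD : Summable (fun j => γ ^ (j + 1) * D j) := by
    have h := (summable_geom_bdd hγ0.le hγ1 hDb).mul_left γ
    refine h.congr fun j => ?_
    rw [pow_succ]; ring
  -- A j tends to ret γ Th π μ0 r
  have htendA : Tendsto Aj atTop (𝓝 (ret γ Th π μ0 r)) := by
    have h1 : Tendsto (fun j => ∑ t ∈ Finset.range j, γ ^ t * ∑ s, ∑ a, μh t s * π s a * r s a)
        atTop (𝓝 (ret γ Th π μ0 r)) :=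
      (summable_ret hγ0.le hγ1 hTh hπ hμ r).hasSum.tendsto_sum_nat
    have hVb : ∀ s, |V s| ≤ boundOf r / (1 - γ) := by
      intro s
      rw [hV, value_eq_ret_dirac]
      exact ret_abs_le hγ0.le hγ1 hT hπ (isDist_dirac s) r
    have hVb0 : 0 ≤ boundOf r / (1 - γ) :=
      div_nonneg (boundOf_nonneg r) (by linarith)
    have hXb : ∀ j, |∑ s, μh j s * V s| ≤ boundOf r / (1 - γ) := by
      intro j
      calc |∑ s, μh j s * V s| ≤ ∑ s, |μh j s * V s| := Finset.abs_sum_le_sum_abs _ _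
        _ ≤ ∑ s, μh j s * (boundOf r / (1 - γ)) := by
            refine Finset.sum_le_sum fun s _ => ?_
            rw [abs_mul, abs_of_nonneg ((hμhD j).1 s)]
            exact mul_le_mul_of_nonneg_left (hVb s) ((hμhD j).1 s)
        _ = boundOf r / (1 - γ) := by rw [← Finset.sum_mul, (hμhD j).2, one_mul]
    have h2 : Tendsto (fun j => γ ^ j * ∑ s, μh j s * V s) atTop (𝓝 0) := by
      apply squeeze_zero_norm (a := fun j => γ ^ j * (boundOf r / (1 - γ)))
      · intro j
        rw [Real.norm_eq_abs, abs_mul, abs_pow, abs_of_nonneg hγ0.le]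
        exact mul_le_mul_of_nonneg_left (hXb j) (pow_nonneg hγ0.le j)
      · have := (tendsto_pow_atTop_nhds_zero_of_lt_one hγ0.le hγ1).mul_const
          (boundOf r / (1 - γ))
        rwa [zero_mul] at this
    have := h1.add h2
    rwa [add_zero] at this
  -- telescoping: the difference series sums to ret_Th - ret_T
  have hsumdiff : Summable (fun j => Aj (j + 1) - Aj j) := hsumD.congr fun j => (hdiff j).symm
  have hhs : HasSum (fun j => Aj (j + 1) - Aj j) (ret γ Th π μ0 r - ret γ T π μ0 r) := by
    rw [hsumdiff.hasSum_iff_tendsto_nat]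
    simp_rw [Finset.sum_range_sub]
    rw [← hA0]
    exact htendA.sub_const (Aj 0)
  have hts : (∑' j, γ ^ (j + 1) * D j) = ret γ Th π μ0 r - ret γ T π μ0 r := by
    rw [← hhs.tsum_eq]
    exact tsum_congr fun j => (hdiff j).symm
  have hretG : ret γ Th π μ0 G = ∑' j, γ ^ j * D j := rfl
  rw [← hts, hretG, ← tsum_mul_left]
  exact tsum_congr fun j => by rw [pow_succ]; ring

lemma occupancy_nonneg {γ : ℝ} (hγ0 : 0 ≤ γ) {T : S → A → S → ℝ} (hT : IsKernel T)
    {π : S → A → ℝ} (hπ : IsPolicy π) {μ0 : S → ℝ} (hμ : IsDist μ0) (s : S) (a : A) :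
    0 ≤ occupancy γ T π μ0 s a :=
  mul_nonneg (hπ.1 s a) (tsum_nonneg fun t =>
    mul_nonneg (pow_nonneg hγ0 t) ((stateDist_isDist hT hπ hμ t).1 s))

lemma expOcc_mono {γ : ℝ} (hγ0 : 0 ≤ γ) {T : S → A → S → ℝ} (hT : IsKernel T)
    {π : S → A → ℝ} (hπ : IsPolicy π) {μ0 : S → ℝ} (hμ : IsDist μ0) {f g : S → A → ℝ}
    (h : ∀ s a, f s a ≤ g s a) :
    expOcc γ T π μ0 f ≤ expOcc γ T π μ0 g :=
  Finset.sum_le_sum fun s _ => Finset.sum_le_sum fun a _ =>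
    mul_le_mul_of_nonneg_left (h s a) (occupancy_nonneg hγ0 hT hπ hμ s a)

lemma expOcc_const_mul (γ : ℝ) (T : S → A → S → ℝ) (π : S → A → ℝ) (μ0 : S → ℝ)
    (c : ℝ) (g : S → A → ℝ) :
    expOcc γ T π μ0 (fun s a => c * g s a) = c * expOcc γ T π μ0 g := by
  unfold expOcc
  simp_rw [Finset.mul_sum]
  exact Finset.sum_congr rfl fun s _ => Finset.sum_congr rfl fun a _ => by ring

lemma expOcc_sub (γ : ℝ) (T : S → A → S → ℝ) (π : S → A → ℝ) (μ0 : S → ℝ)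
    (f g : S → A → ℝ) :
    expOcc γ T π μ0 (fun s a => f s a - g s a)
      = expOcc γ T π μ0 f - expOcc γ T π μ0 g := by
  unfold expOcc
  simp_rw [mul_sub, Finset.sum_sub_distrib]


/-- MOPO with deterministic dynamics and Lipschitz values: the Wasserstein instantiation. -/
theorem mopo_deterministic_lipschitz {S A : Type*} [Fintype S] [Fintype A] [MetricSpace S]
    (γ : ℝ) (hγ0 : 0 < γ) (hγ1 : γ < 1)
    (tm that : S → A → S) (T Th : S → A → S → ℝ)
    (hTdet : ∀ s a s', T s a s' = if s' = tm s a then (1 : ℝ) else 0)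
    (hThdet : ∀ s a s', Th s a s' = if s' = that s a then (1 : ℝ) else 0)
    (μ0 : S → ℝ) (hμ : IsDist μ0) (r : S → A → ℝ)
    (rmax : ℝ) (hr : ∀ s a, |r s a| ≤ rmax)
    (L : ℝ) (hL : 0 ≤ L)
    (hLip : ∀ π : S → A → ℝ, IsPolicy π →
      ∀ x y : S, |value γ T π r x - value γ T π r y| ≤ L * dist x y)
    (πhat : S → A → ℝ) (hπhat : IsPolicy πhat)
    (hopt : ∀ π : S → A → ℝ, IsPolicy π →
      expOcc γ Th π μ0 (fun s a => r s a - γ * L * dist (that s a) (tm s a))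
        ≤ expOcc γ Th πhat μ0 (fun s a => r s a - γ * L * dist (that s a) (tm s a))) :
    ∀ π : S → A → ℝ, IsPolicy π →
      ret γ T πhat μ0 r
        ≥ ret γ T π μ0 r
          - 2 * γ * L * expOcc γ Th π μ0 (fun s a => dist (that s a) (tm s a)) := by
  intro π hπ
  have hTker : IsKernel T := by
    constructor
    · intro s a s'; rw [hTdet]; split <;> norm_num
    · intro s a; simp [hTdet]
  have hThker : IsKernel Th := by
    constructor
    · intro s a s'; rw [hThdet]; split <;> norm_num
    · intro s a; simp [hThdet]
  have hGdet : ∀ (p : S → A → ℝ) (s : S) (a : A),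
      Gpi γ T Th p r s a = value γ T p r (that s a) - value γ T p r (tm s a) := by
    intro p s a
    unfold Gpi
    simp [hTdet, hThdet, ite_mul, one_mul, zero_mul, Finset.sum_ite_eq']
  have hGb : ∀ (p : S → A → ℝ), IsPolicy p → ∀ s a,
      |Gpi γ T Th p r s a| ≤ L * dist (that s a) (tm s a) := by
    intro p hp s a
    rw [hGdet]
    exact hLip p hp _ _
  have key : ∀ p, IsPolicy p →
      ret γ Th p μ0 r - ret γ T p μ0 r = γ * expOcc γ Th p μ0 (Gpi γ T Th p r) := by
    intro p hp
    rw [ret_diff_eq hγ0 hγ1 hTker hThker hp hμ r,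
      expOcc_eq_ret hγ0.le hγ1 hThker hp hμ]
  have hbound : ∀ p, IsPolicy p →
      expOcc γ Th p μ0 (Gpi γ T Th p r)
          ≤ L * expOcc γ Th p μ0 (fun s a => dist (that s a) (tm s a))
      ∧ -(L * expOcc γ Th p μ0 (fun s a => dist (that s a) (tm s a)))
          ≤ expOcc γ Th p μ0 (Gpi γ T Th p r) := by
    intro p hp
    constructor
    · calc expOcc γ Th p μ0 (Gpi γ T Th p r)
          ≤ expOcc γ Th p μ0 (fun s a => L * dist (that s a) (tm s a)) :=
            expOcc_mono hγ0.le hThker hp hμ (fun s a => (abs_le.1 (hGb p hp s a)).2)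
        _ = L * expOcc γ Th p μ0 (fun s a => dist (that s a) (tm s a)) :=
            expOcc_const_mul γ Th p μ0 L _
    · calc -(L * expOcc γ Th p μ0 (fun s a => dist (that s a) (tm s a)))
          = expOcc γ Th p μ0 (fun s a => -L * dist (that s a) (tm s a)) := by
            rw [expOcc_const_mul γ Th p μ0 (-L) _, neg_mul]
        _ ≤ expOcc γ Th p μ0 (Gpi γ T Th p r) := by
            refine expOcc_mono hγ0.le hThker hp hμ (fun s a => ?_)
            have := (abs_le.1 (hGb p hp s a)).1
            linarith
  have hlin : ∀ p : S → A → ℝ,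
      expOcc γ Th p μ0 (fun s a => r s a - γ * L * dist (that s a) (tm s a))
        = expOcc γ Th p μ0 r
          - γ * L * expOcc γ Th p μ0 (fun s a => dist (that s a) (tm s a)) := by
    intro p
    rw [expOcc_sub γ Th p μ0 r (fun s a => γ * L * dist (that s a) (tm s a)),
      expOcc_const_mul γ Th p μ0 (γ * L) _]
  have hoptπ := hopt π hπ
  rw [hlin πhat, hlin π] at hoptπ
  have e1 : expOcc γ Th πhat μ0 r = ret γ Th πhat μ0 r :=
    expOcc_eq_ret hγ0.le hγ1 hThker hπhat hμ r
  have e2 : expOcc γ Th π μ0 r = ret γ Th π μ0 r :=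
    expOcc_eq_ret hγ0.le hγ1 hThker hπ hμ r
  obtain ⟨h2h, _⟩ := hbound πhat hπhat
  obtain ⟨_, h3p⟩ := hbound π hπ
  have k1 := key πhat hπhat
  have k2 := key π hπ
  have m1 : γ * expOcc γ Th πhat μ0 (Gpi γ T Th πhat r)
      ≤ γ * L * expOcc γ Th πhat μ0 (fun s a => dist (that s a) (tm s a)) := by
    calc γ * expOcc γ Th πhat μ0 (Gpi γ T Th πhat r)
        ≤ γ * (L * expOcc γ Th πhat μ0 (fun s a => dist (that s a) (tm s a))) :=
          mul_le_mul_of_nonneg_left h2h hγ0.le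
      _ = γ * L * expOcc γ Th πhat μ0 (fun s a => dist (that s a) (tm s a)) := by ring
  have m2 : -(γ * L * expOcc γ Th π μ0 (fun s a => dist (that s a) (tm s a)))
      ≤ γ * expOcc γ Th π μ0 (Gpi γ T Th π r) := by
    calc -(γ * L * expOcc γ Th π μ0 (fun s a => dist (that s a) (tm s a)))
        = γ * -(L * expOcc γ Th π μ0 (fun s a => dist (that s a) (tm s a))) := by ring
      _ ≤ γ * expOcc γ Th π μ0 (Gpi γ T Th π r) :=
          mul_le_mul_of_nonneg_left h3p hγ0.le
  linarith [hoptπ, e1, e2, k1, k2, m1, m2]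


end MDP
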